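/- The algebra ℚ[x₁, x₁x₂, x₁x₂x₃] ⊂ ℚ[x₁,x₂,x₃] is the initial algebra of K[e₁,e₂,e₃] where K = ℚ(t), e₁ = x₁+t x₂+t² x₃, e₂ = x₁x₂+t x₁x₃+t² x₂x₃, e₃ = x₁x₂x₃; equivalently, every initial form of a polynomial in K[e₁,e₂,e₃] is a monomial in x₁, x₁x₂, x₁x₂x₃. -/

import Mathlib

open MvPolynomial

/-- The order of a nonzero rational function at `t = 0`. -/
noncomputable def ordRF (c : RatFunc ℚ) : ℤ := ((c : LaurentSeries ℚ)).order

/-- The coefficient of the lowest power of `t` in a rational function. -/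
noncomputable def leadRF (c : RatFunc ℚ) : ℚ := ((c : LaurentSeries ℚ)).coeff (ordRF c)

/-- The initial form `in(f)` of `f ∈ ℚ(t)[x]`: the coefficient of the lowest power of `t`. -/
noncomputable def initialForm {σ : Type*} (f : MvPolynomial σ (RatFunc ℚ)) :
    MvPolynomial σ ℚ :=
  ∑ m ∈ f.support,
    if (ordRF (f.coeff m) : WithTop ℤ)
        = (f.support.image fun m' => ordRF (f.coeff m')).min
    then MvPolynomial.monomial m (leadRF (f.coeff m)) else 0

set_option maxHeartbeats 1000000
set_option synthInstance.maxHeartbeats 400000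

namespace Stmt8Aux

open HahnSeries

lemma coeLS_ne_zero {c : RatFunc ℚ} (hc : c ≠ 0) : (c : LaurentSeries ℚ) ≠ 0 := by
  intro h
  exact hc ((map_eq_zero _).mp h)

lemma lead_eq_coeff_order {x : LaurentSeries ℚ} (hx : x ≠ 0) :
    x.leadingCoeff = x.coeff x.order := by
  exact leadingCoeff_eq

lemma leadRF_eq (c : RatFunc ℚ) : leadRF c = (c : LaurentSeries ℚ).leadingCoeff := by
  rcases eq_or_ne c 0 with rfl | hc
  · simp [leadRF, map_zero]
  · rw [leadRF, lead_eq_coeff_order (coeLS_ne_zero hc), ordRF]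

lemma leadRF_ne_zero {c : RatFunc ℚ} (hc : c ≠ 0) : leadRF c ≠ 0 := by
  rw [leadRF_eq]; exact leadingCoeff_ne_zero.mpr (coeLS_ne_zero hc)

lemma ordRF_zero : ordRF 0 = 0 := by simp [ordRF, map_zero]

lemma ordRF_one : ordRF 1 = 0 := by simp [ordRF, map_one, order_one]

lemma ordRF_mul {a b : RatFunc ℚ} (ha : a ≠ 0) (hb : b ≠ 0) :
    ordRF (a * b) = ordRF a + ordRF b := by
  simp only [ordRF, map_mul]
  exact order_mul (coeLS_ne_zero ha) (coeLS_ne_zero hb)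

lemma leadRF_mul {a b : RatFunc ℚ} (ha : a ≠ 0) (hb : b ≠ 0) :
    leadRF (a * b) = leadRF a * leadRF b := by
  have hA := coeLS_ne_zero ha
  have hB := coeLS_ne_zero hb
  simp only [leadRF_eq, map_mul]
  rw [lead_eq_coeff_order (mul_ne_zero hA hB), order_mul hA hB, coeff_mul_order_add_order]

lemma leadRF_one : leadRF 1 = 1 := by
  rw [leadRF_eq, map_one]
  rw [← single_zero_one, leadingCoeff_of_single]

lemma ordRF_X : ordRF RatFunc.X = 1 := by
  rw [ordRF, RatFunc.coe_X]; exact order_single one_ne_zero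

lemma leadRF_X : leadRF RatFunc.X = 1 := by
  rw [leadRF_eq, RatFunc.coe_X, leadingCoeff_of_single]

lemma ordRF_inv {c : RatFunc ℚ} (hc : c ≠ 0) : ordRF c⁻¹ = -ordRF c := by
  have h := ordRF_mul hc (inv_ne_zero hc)
  rw [mul_inv_cancel₀ hc, ordRF_one] at h
  linarith

lemma leadRF_inv {c : RatFunc ℚ} (hc : c ≠ 0) : leadRF c⁻¹ = (leadRF c)⁻¹ := by
  have h := leadRF_mul hc (inv_ne_zero hc)
  rw [mul_inv_cancel₀ hc, leadRF_one] at h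
  exact eq_inv_of_mul_eq_one_right h.symm

lemma ordRF_pow (k : ℕ) : ordRF (RatFunc.X ^ k) = k := by
  induction k with
  | zero => simpa using ordRF_one
  | succ n ih =>
    rw [pow_succ, ordRF_mul (pow_ne_zero _ RatFunc.X_ne_zero) RatFunc.X_ne_zero, ih, ordRF_X]
    push_cast; ring

lemma leadRF_pow (k : ℕ) : leadRF (RatFunc.X ^ k) = 1 := by
  induction k with
  | zero => simpa using leadRF_one
  | succ n ih =>
    rw [pow_succ, leadRF_mul (pow_ne_zero _ RatFunc.X_ne_zero) RatFunc.X_ne_zero, ih, leadRF_X,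
      one_mul]

lemma ordRF_zpow (n : ℤ) : ordRF ((RatFunc.X : RatFunc ℚ) ^ n) = n := by
  cases n with
  | ofNat k => rw [Int.ofNat_eq_coe, zpow_natCast, ordRF_pow]
  | negSucc k =>
    rw [zpow_negSucc, ordRF_inv (pow_ne_zero _ RatFunc.X_ne_zero), ordRF_pow,
      Int.negSucc_eq]
    push_cast
    ring

lemma leadRF_zpow (n : ℤ) : leadRF ((RatFunc.X : RatFunc ℚ) ^ n) = 1 := by
  cases n with
  | ofNat k => rw [Int.ofNat_eq_coe, zpow_natCast, leadRF_pow]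
  | negSucc k =>
    rw [zpow_negSucc, leadRF_inv (pow_ne_zero _ RatFunc.X_ne_zero), leadRF_pow]
    simp

/-- The valuation subring of `ℚ(t)`: rational functions regular at `t = 0`. -/
noncomputable def Rsub : Subring (RatFunc ℚ) where
  carrier := {c | 0 ≤ ordRF c}
  zero_mem' := by simp [ordRF_zero]
  one_mem' := by simp [ordRF_one]
  add_mem' := by
    intro a b ha hb
    rcases eq_or_ne (a + b) 0 with h | h
    · simp [Set.mem_setOf_eq, h, ordRF_zero]
    · have := min_order_le_order_add (x := (a : LaurentSeries ℚ)) (y := (b : LaurentSeries ℚ))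
        (by rw [← map_add]; exact coeLS_ne_zero h)
      simp only [Set.mem_setOf_eq, ordRF, map_add] at *
      exact le_trans (le_min ha hb) this
  neg_mem' := by
    intro a ha
    simp only [Set.mem_setOf_eq, ordRF, map_neg, order_neg] at *
    exact ha
  mul_mem' := by
    intro a b ha hb
    rcases eq_or_ne a 0 with rfl | ha0
    · simp [Set.mem_setOf_eq, ordRF_zero]
    rcases eq_or_ne b 0 with rfl | hb0
    · simp [Set.mem_setOf_eq, ordRF_zero]
    simp only [Set.mem_setOf_eq] at *
    rw [ordRF_mul ha0 hb0]
    exact add_nonneg ha hb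

lemma mem_Rsub {c : RatFunc ℚ} : c ∈ Rsub ↔ 0 ≤ ordRF c := Iff.rfl

/-- Reduction mod `t`, as a ring hom from the valuation subring to `ℚ`. -/
noncomputable def pi0 : Rsub →+* ℚ where
  toFun c := ((c : RatFunc ℚ) : LaurentSeries ℚ).coeff 0
  map_one' := by
    show ((1 : RatFunc ℚ) : LaurentSeries ℚ).coeff 0 = 1
    rw [map_one, ← single_zero_one, coeff_single_same]
  map_mul' := by
    intro a b
    show (((a * b : Rsub) : RatFunc ℚ) : LaurentSeries ℚ).coeff 0 = _
    rcases eq_or_ne (a : RatFunc ℚ) 0 with h0 | h0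
    · simp [h0, map_zero]
    rcases eq_or_ne (b : RatFunc ℚ) 0 with h1 | h1
    · simp [h1, map_zero]
    have hA := coeLS_ne_zero h0
    have hB := coeLS_ne_zero h1
    have ha : (0 : ℤ) ≤ ((a : RatFunc ℚ) : LaurentSeries ℚ).order := a.2
    have hb : (0 : ℤ) ≤ ((b : RatFunc ℚ) : LaurentSeries ℚ).order := b.2
    push_cast
    rcases eq_or_lt_of_le ha with ha0 | ha0
    · rcases eq_or_lt_of_le hb with hb0 | hb0
      · have : (0 : ℤ) = ((a : RatFunc ℚ) : LaurentSeries ℚ).order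
            + ((b : RatFunc ℚ) : LaurentSeries ℚ).order := by rw [← ha0, ← hb0]; ring
        rw [this, coeff_mul_order_add_order, lead_eq_coeff_order hA, lead_eq_coeff_order hB,
          ← ha0, ← hb0]
        norm_num
      · rw [coeff_eq_zero_of_lt_order (x := ((b : RatFunc ℚ) : LaurentSeries ℚ)) hb0, mul_zero]
        apply coeff_eq_zero_of_lt_order
        rw [order_mul hA hB]
        omega
    · rw [coeff_eq_zero_of_lt_order (x := ((a : RatFunc ℚ) : LaurentSeries ℚ)) ha0, zero_mul]
      apply coeff_eq_zero_of_lt_order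
      rw [order_mul hA hB]
      omega
  map_zero' := by
    show ((0 : RatFunc ℚ) : LaurentSeries ℚ).coeff 0 = 0
    rw [map_zero]; simp
  map_add' := by
    intro a b
    show (((a + b : Rsub) : RatFunc ℚ) : LaurentSeries ℚ).coeff 0 = _
    push_cast
    simp

lemma pi0_apply (c : Rsub) : pi0 c = ((c : RatFunc ℚ) : LaurentSeries ℚ).coeff 0 := rfl

lemma pi0_eq_zero_of_pos {c : Rsub} (h : 0 < ordRF (c : RatFunc ℚ)) : pi0 c = 0 := by
  rw [pi0_apply]
  exact coeff_eq_zero_of_lt_order h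

lemma pi0_ne_zero_of_ord_zero {c : Rsub} (h : ordRF (c : RatFunc ℚ) = 0)
    (hc : (c : RatFunc ℚ) ≠ 0) : pi0 c ≠ 0 := by
  rw [pi0_apply]
  have : ((c : RatFunc ℚ) : LaurentSeries ℚ).coeff ((c : RatFunc ℚ) : LaurentSeries ℚ).order ≠ 0 := by
    rw [← leadingCoeff_eq]; exact leadingCoeff_ne_zero.mpr (coeLS_ne_zero hc)
  rwa [show ((c : RatFunc ℚ) : LaurentSeries ℚ).order = 0 from h] at this


noncomputable def iota : Rsub →+* RatFunc ℚ := Rsub.subtype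

lemma iota_inj : Function.Injective iota := Subtype.val_injective

/-- Central lemma: if `F` has coefficients in the valuation ring and its reduction mod `t`
is nonzero, then the initial form of `F` (viewed over `ℚ(t)`) is its reduction mod `t`. -/
lemma initialForm_map {F : MvPolynomial (Fin 3) Rsub} (h : F.map pi0 ≠ 0) :
    initialForm (F.map iota) = F.map pi0 := by
  have hsupp : (F.map iota).support = F.support := support_map_of_injective _ iota_inj
  obtain ⟨m₀, hm₀⟩ : ∃ m, pi0 (F.coeff m) ≠ 0 := by
    by_contra h'
    push_neg at h'
    apply h
    ext m
    rw [coeff_map, h' m, MvPolynomial.coeff_zero]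
  have hm₀s : m₀ ∈ F.support := by
    rw [mem_support_iff]
    intro h0
    rw [h0, map_zero] at hm₀
    exact hm₀ rfl
  have hord : ∀ m, 0 ≤ ordRF ((F.map iota).coeff m) := by
    intro m
    rw [coeff_map]
    exact (F.coeff m).2
  have h0 : ordRF ((F.map iota).coeff m₀) = 0 := by
    refine le_antisymm ?_ (hord m₀)
    rw [coeff_map]
    exact HahnSeries.order_le_of_coeff_ne_zero hm₀
  have hmin : ((F.map iota).support.image fun m' => ordRF ((F.map iota).coeff m')).min
      = (0 : WithTop ℤ) := by
    apply le_antisymm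
    · refine le_trans (Finset.min_le (Finset.mem_image.mpr ⟨m₀, by rw [hsupp]; exact hm₀s, rfl⟩)) ?_
      simp [h0]
    · apply Finset.le_min
      intro b hb
      obtain ⟨m, _, rfl⟩ := Finset.mem_image.mp hb
      exact_mod_cast hord m
  have hrhs : F.map pi0 = ∑ m ∈ F.support, monomial m (pi0 (F.coeff m)) := by
    conv_lhs => rw [(F.map pi0).as_sum]
    simp_rw [coeff_map]
    refine Finset.sum_subset (support_map_subset _ _) (fun m _ hm => ?_)
    have hz : pi0 (F.coeff m) = 0 := by
      rw [← coeff_map pi0]; exact notMem_support_iff.mp hm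
    rw [hz, map_zero]
  simp only [initialForm]
  rw [hmin, hsupp, hrhs]
  apply Finset.sum_congr rfl
  intro m _
  by_cases hc : ordRF ((F.map iota).coeff m) = 0
  · have hcm : (F.map iota).coeff m = iota (F.coeff m) := coeff_map iota F m
    rw [if_pos (by exact_mod_cast hc)]
    congr 1
    rw [leadRF, hc, hcm]
    rfl
  · rw [if_neg (by exact_mod_cast hc)]
    have hpos : 0 < ordRF ((F.map iota).coeff m) := lt_of_le_of_ne (hord m) (Ne.symm hc)
    have hpos' : 0 < ordRF (iota (F.coeff m)) := by rwa [coeff_map] at hpos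
    rw [pi0_eq_zero_of_pos hpos', map_zero]

lemma initialForm_C_mul {c : RatFunc ℚ} (hc : c ≠ 0) (f : MvPolynomial (Fin 3) (RatFunc ℚ)) :
    initialForm (C c * f) = leadRF c • initialForm f := by
  rcases eq_or_ne f 0 with rfl | hf
  · simp [initialForm]
  have hsupp : (C c * f).support = f.support := by
    ext m
    simp [mem_support_iff, coeff_C_mul, hc]
  have hne : f.support.Nonempty := support_nonempty.mpr hf
  set M : Finset ℤ := f.support.image fun m' => ordRF (f.coeff m') with hM
  have Mne : M.Nonempty := hne.image _
  set b : ℤ := M.min' Mne with hb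
  have hbmin : M.min = (b : WithTop ℤ) := (Finset.coe_min' Mne).symm
  have hmin2 : (f.support.image fun m' => ordRF ((C c * f).coeff m')).min
      = ((ordRF c + b : ℤ) : WithTop ℤ) := by
    have himg : (f.support.image fun m' => ordRF ((C c * f).coeff m'))
        = M.image (fun o => ordRF c + o) := by
      rw [hM, Finset.image_image]
      apply Finset.image_congr
      intro m hm
      simp only [Function.comp_apply]
      rw [coeff_C_mul, ordRF_mul hc (mem_support_iff.mp hm)]
    rw [himg]
    apply le_antisymm
    · exact Finset.min_le (Finset.mem_image.mpr ⟨b, M.min'_mem Mne, rfl⟩)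
    · apply Finset.le_min
      intro y hy
      obtain ⟨o, ho, rfl⟩ := Finset.mem_image.mp hy
      have hbo : b ≤ o := M.min'_le o ho
      exact_mod_cast (add_le_add_iff_left _).mpr hbo
  simp only [initialForm]
  rw [hsupp, hmin2, ← hM, hbmin, Finset.smul_sum]
  apply Finset.sum_congr rfl
  intro m hm
  have hcm : f.coeff m ≠ 0 := mem_support_iff.mp hm
  rw [coeff_C_mul, ordRF_mul hc hcm, leadRF_mul hc hcm]
  by_cases h : ordRF (f.coeff m) = b
  · rw [if_pos (by exact_mod_cast congrArg (ordRF c + ·) h),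
      if_pos (by exact_mod_cast h), smul_monomial, smul_eq_mul]
  · have h1 : ¬((ordRF c + ordRF (f.coeff m) : ℤ) : WithTop ℤ) = ((ordRF c + b : ℤ) : WithTop ℤ) := by
      intro hh
      have : ordRF c + ordRF (f.coeff m) = ordRF c + b := by exact_mod_cast hh
      exact h (by omega)
    rw [if_neg h1, if_neg (by exact_mod_cast h), smul_zero]

lemma map_aeval_eq {R S : Type*} [CommRing R] [CommRing S] (g : R →+* S)
    (w : Fin 3 → MvPolynomial (Fin 3) R) (p : MvPolynomial (Fin 3) R) :
    map g (aeval w p) = aeval (fun i => map g (w i)) (map g p) := by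
  induction p using MvPolynomial.induction_on with
  | C r => simp [aeval_C, algebraMap_eq]
  | add p q hp hq => simp only [map_add, hp, hq]
  | mul_X p i hp => simp only [map_mul, aeval_X, map_X, hp]

/-- The target monomial map: `x^m ↦ x₁^{m₀+m₁+m₂} x₂^{m₁+m₂} x₃^{m₂}`. -/
noncomputable def Tm (m : Fin 3 →₀ ℕ) : Fin 3 →₀ ℕ :=
  Finsupp.single 0 (m 0 + m 1 + m 2) + Finsupp.single 1 (m 1 + m 2) + Finsupp.single 2 (m 2)

lemma Tm_inj : Function.Injective Tm := by
  intro m m' h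
  have ha := congrArg (fun g => g 2) h
  have hb := congrArg (fun g => g 1) h
  have hc := congrArg (fun g => g 0) h
  simp [Tm, Finsupp.add_apply, Finsupp.single_apply, Fin.ext_iff] at ha hb hc
  ext i
  fin_cases i <;> simp <;> omega

noncomputable def vgen : Fin 3 → MvPolynomial (Fin 3) ℚ := ![X 0, X 0 * X 1, X 0 * X 1 * X 2]

lemma aeval_v_monomial (m : Fin 3 →₀ ℕ) (r : ℚ) :
    aeval vgen (monomial m r) = monomial (Tm m) r := by
  have hT : (Finsupp.single (0 : Fin 3) (m 0) + (Finsupp.single 0 (m 1) + Finsupp.single 1 (m 1))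
      + (Finsupp.single 0 (m 2) + Finsupp.single 1 (m 2) + Finsupp.single 2 (m 2))) = Tm m := by
    ext i
    fin_cases i
    all_goals simp [Tm, Finsupp.add_apply, Finsupp.single_apply, Fin.ext_iff]
  rw [aeval_monomial, Finsupp.prod_fintype _ _ (fun i => pow_zero _), Fin.prod_univ_three]
  simp only [vgen, Matrix.cons_val_zero, Matrix.cons_val_one, Matrix.head_cons,
    Matrix.cons_val_two, Matrix.tail_cons]
  rw [mul_pow, mul_pow, mul_pow]
  simp only [X_pow_eq_monomial, monomial_mul, algebraMap_eq, C_mul_monomial, mul_one]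
  rw [hT]

lemma aeval_v_injective {p : MvPolynomial (Fin 3) ℚ} (hp : aeval vgen p = 0) : p = 0 := by
  by_contra hne
  obtain ⟨m₀, hm₀⟩ := support_nonempty.mpr hne
  have key : coeff (Tm m₀) (aeval vgen p) = coeff m₀ p := by
    conv_lhs => rw [p.as_sum, map_sum]
    simp_rw [aeval_v_monomial]
    rw [MvPolynomial.coeff_sum]
    rw [Finset.sum_eq_single m₀ (fun m _ hne' => by
        rw [coeff_monomial, if_neg (fun hh => hne' (Tm_inj hh))])
      (fun hnot => absurd hm₀ hnot)]
    rw [coeff_monomial, if_pos rfl]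
  rw [hp, MvPolynomial.coeff_zero] at key
  exact mem_support_iff.mp hm₀ key.symm


lemma X_mem : (RatFunc.X : RatFunc ℚ) ∈ Rsub := by rw [mem_Rsub, ordRF_X]; norm_num

lemma X2_mem : (RatFunc.X ^ 2 : RatFunc ℚ) ∈ Rsub := by rw [mem_Rsub, ordRF_pow]; norm_num

noncomputable def Egen : Fin 3 → MvPolynomial (Fin 3) Rsub :=
  ![X 0 + MvPolynomial.C ⟨RatFunc.X, X_mem⟩ * X 1
      + MvPolynomial.C ⟨RatFunc.X ^ 2, X2_mem⟩ * X 2,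
    X 0 * X 1 + MvPolynomial.C ⟨RatFunc.X, X_mem⟩ * (X 0 * X 2)
      + MvPolynomial.C ⟨RatFunc.X ^ 2, X2_mem⟩ * (X 1 * X 2),
    X 0 * X 1 * X 2]

lemma pi0_X : pi0 ⟨RatFunc.X, X_mem⟩ = 0 :=
  pi0_eq_zero_of_pos (show (0 : ℤ) < ordRF RatFunc.X by rw [ordRF_X]; norm_num)

lemma pi0_X2 : pi0 ⟨RatFunc.X ^ 2, X2_mem⟩ = 0 :=
  pi0_eq_zero_of_pos (show (0 : ℤ) < ordRF (RatFunc.X ^ 2) by rw [ordRF_pow]; norm_num)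

lemma map_pi0_Egen (i : Fin 3) : map pi0 (Egen i) = vgen i := by
  fin_cases i <;>
    simp [Egen, vgen, map_add, map_mul, MvPolynomial.map_C, map_X, pi0_X, pi0_X2]

lemma vgen_ne (i : Fin 3) : vgen i ≠ 0 := by
  fin_cases i
  · exact X_ne_zero _
  · exact mul_ne_zero (X_ne_zero _) (X_ne_zero _)
  · exact mul_ne_zero (mul_ne_zero (X_ne_zero _) (X_ne_zero _)) (X_ne_zero _)

end Stmt8Aux

open Stmt8Aux

/-- The initial algebra of `U = K[e₁,e₂,e₃]`, where `K = ℚ(t)`,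
`e₁ = x₁+tx₂+t²x₃`, `e₂ = x₁x₂+tx₁x₃+t²x₂x₃`, `e₃ = x₁x₂x₃`, equals
`ℚ[x₁, x₁x₂, x₁x₂x₃]`. -/
theorem stmt8
    (e₁ e₂ e₃ : MvPolynomial (Fin 3) (RatFunc ℚ))
    (he₁ : e₁ = X 0 + C RatFunc.X * X 1 + C (RatFunc.X ^ 2) * X 2)
    (he₂ : e₂ = X 0 * X 1 + C RatFunc.X * (X 0 * X 2) + C (RatFunc.X ^ 2) * (X 1 * X 2))
    (he₃ : e₃ = X 0 * X 1 * X 2) :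
    Algebra.adjoin ℚ
        {g : MvPolynomial (Fin 3) ℚ |
          ∃ f ∈ Algebra.adjoin (RatFunc ℚ) {e₁, e₂, e₃}, f ≠ 0 ∧ g = initialForm f}
      = Algebra.adjoin ℚ
          ({X 0, X 0 * X 1, X 0 * X 1 * X 2} : Set (MvPolynomial (Fin 3) ℚ)) := by
  have hEiota : ∀ i : Fin 3, map iota (Egen i) = ![e₁, e₂, e₃] i := by
    intro i
    fin_cases i <;>
      simp [Egen, he₁, he₂, he₃, iota, map_add, map_mul, MvPolynomial.map_C, map_X,
        Subring.coe_subtype]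
  have hrangeE : Set.range ![e₁, e₂, e₃] = {e₁, e₂, e₃} := by
    ext x
    constructor
    · rintro ⟨i, rfl⟩
      fin_cases i <;> simp
    · intro hx
      rcases hx with rfl | rfl | rfl
      exacts [⟨0, rfl⟩, ⟨1, rfl⟩, ⟨2, rfl⟩]
  have hrangeV : Set.range vgen = {X 0, X 0 * X 1, X 0 * X 1 * X 2} := by
    ext x
    constructor
    · rintro ⟨i, rfl⟩
      fin_cases i <;> simp [vgen]
    · intro hx
      rcases hx with rfl | rfl | rfl
      exacts [⟨0, rfl⟩, ⟨1, rfl⟩, ⟨2, rfl⟩]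
  apply le_antisymm
  · apply Algebra.adjoin_le
    rintro g ⟨f, hfU, hf0, rfl⟩
    rw [← hrangeE, Algebra.adjoin_range_eq_range_aeval] at hfU
    obtain ⟨P, hP0⟩ := hfU
    have hP : aeval ![e₁, e₂, e₃] P = f := hP0
    have hPne : P ≠ 0 := by
      rintro rfl
      rw [map_zero] at hP
      exact hf0 hP.symm
    have hPsupp : P.support.Nonempty := support_nonempty.mpr hPne
    set M : Finset ℤ := P.support.image fun m => ordRF (P.coeff m) with hM
    have Mne : M.Nonempty := hPsupp.image _
    set b : ℤ := M.min' Mne with hb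
    set c : RatFunc ℚ := (RatFunc.X : RatFunc ℚ) ^ (-b) with hcdef
    have hc : c ≠ 0 := zpow_ne_zero _ RatFunc.X_ne_zero
    have hordc : ordRF c = -b := by rw [hcdef]; exact ordRF_zpow _
    have hlc : leadRF c = 1 := by rw [hcdef]; exact leadRF_zpow _
    have hmem : ∀ m, c * P.coeff m ∈ Rsub := by
      intro m
      rcases eq_or_ne (P.coeff m) 0 with h0 | h0
      · rw [h0, mul_zero]; exact Rsub.zero_mem
      · rw [mem_Rsub, ordRF_mul hc h0, hordc]
        have hble : b ≤ ordRF (P.coeff m) :=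
          M.min'_le _ (Finset.mem_image.mpr ⟨m, mem_support_iff.mpr h0, rfl⟩)
        omega
    set Q : MvPolynomial (Fin 3) Rsub :=
      ∑ m ∈ P.support, monomial m ⟨c * P.coeff m, hmem m⟩ with hQ
    have hQmap : map iota Q = C c * P := by
      rw [hQ, map_sum]
      conv_rhs => rw [P.as_sum, Finset.mul_sum]
      apply Finset.sum_congr rfl
      intro m _
      rw [map_monomial, C_mul_monomial]
      rfl
    obtain ⟨m₀, hm₀s, hm₀b⟩ := Finset.mem_image.mp (M.min'_mem Mne)
    have hm₀ne : P.coeff m₀ ≠ 0 := mem_support_iff.mp hm₀s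
    have hQm₀ : iota (Q.coeff m₀) = c * P.coeff m₀ := by
      rw [← coeff_map, hQmap, coeff_C_mul]
    have hQQ : pi0 (Q.coeff m₀) ≠ 0 := by
      apply pi0_ne_zero_of_ord_zero
      · show ordRF (iota (Q.coeff m₀)) = 0
        rw [hQm₀, ordRF_mul hc hm₀ne, hordc, hm₀b]
        ring
      · show iota (Q.coeff m₀) ≠ 0
        rw [hQm₀]
        exact mul_ne_zero hc hm₀ne
    have hQpi : map pi0 Q ≠ 0 := by
      intro h0
      apply hQQ
      rw [← coeff_map pi0, h0, MvPolynomial.coeff_zero]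
    set F : MvPolynomial (Fin 3) Rsub := aeval Egen Q with hF
    have h1 : map iota F = C c * f := by
      rw [hF, map_aeval_eq, funext hEiota, hQmap, map_mul, aeval_C, algebraMap_eq, hP]
    have h2 : map pi0 F = aeval vgen (map pi0 Q) := by
      rw [hF, map_aeval_eq, funext map_pi0_Egen]
    have h4 : map pi0 F ≠ 0 := by
      rw [h2]
      intro h0
      exact hQpi (aeval_v_injective h0)
    have h5 : initialForm (map iota F) = map pi0 F := initialForm_map h4
    rw [h1, initialForm_C_mul hc f, hlc, one_smul] at h5
    rw [h5, h2]
    have : Algebra.adjoin ℚ ({X 0, X 0 * X 1, X 0 * X 1 * X 2} :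
        Set (MvPolynomial (Fin 3) ℚ)) = (aeval vgen).range := by
      rw [← hrangeV, Algebra.adjoin_range_eq_range_aeval]
    rw [SetLike.mem_coe, this]
    exact ⟨map pi0 Q, rfl⟩
  · apply Algebra.adjoin_le
    intro x hx
    apply Algebra.subset_adjoin
    have key : ∀ i : Fin 3, ∃ f ∈ Algebra.adjoin (RatFunc ℚ) {e₁, e₂, e₃},
        f ≠ 0 ∧ vgen i = initialForm f := by
      intro i
      have hEne : map pi0 (Egen i) ≠ 0 := by
        rw [map_pi0_Egen]
        exact vgen_ne i
      refine ⟨![e₁, e₂, e₃] i, ?_, ?_, ?_⟩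
      · apply Algebra.subset_adjoin
        fin_cases i <;> simp
      · intro h0
        have hz : Egen i = 0 := by
          apply map_injective iota iota_inj
          rw [hEiota i, h0, map_zero]
        rw [hz, map_zero] at hEne
        exact hEne rfl
      · rw [← hEiota i, initialForm_map hEne, map_pi0_Egen]
    rcases hx with rfl | rfl | rfl
    · simpa [vgen] using key 0
    · simpa [vgen] using key 1
    · simpa [vgen] using key 2
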